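/- Let Γ be a finitely generated nilpotent group and let K be a closed subgroup of the unitary group U(n). Then every representation ρ in the connected component of the trivial homomorphism 𝟙 in the representation space Hom(Γ,K) kills the commutator subgroup: for all ρ ∈ connectedComponent(𝟙), the commutator subgroup [Γ,Γ] is contained in ker ρ. -/

import Mathlib

/-- The representation space `Hom(Γ,G)`: group homomorphisms with the topology of pointwise
convergence, i.e. the topology induced from the product space `Γ → G`. -/
instance repSpaceTopology {Γ G : Type*} [Group Γ] [Group G] [TopologicalSpace G] :
    TopologicalSpace (Γ →* G) :=
  TopologicalSpace.induced (fun ρ => (ρ : Γ → G)) Pi.topologicalSpace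

open Matrix in
/-- A unitary matrix of size `n` whose trace is `n` is the identity. -/
lemma unitary_trace_eq_card_imp_one {n : ℕ} (C : Matrix (Fin n) (Fin n) ℂ)
    (hC : C ∈ Matrix.unitaryGroup (Fin n) ℂ) (h : C.trace = (n : ℂ)) : C = 1 := by
  have hrow : ∀ i, ∑ j, Complex.normSq (C i j) = 1 := by
    intro i
    have h1 : (C * star C) i i = 1 := by
      rw [Matrix.mem_unitaryGroup_iff.mp hC]; simp [Matrix.one_apply]
    have : ∑ j, C i j * (starRingEnd ℂ) (C i j) = 1 := by
      simpa [Matrix.mul_apply, Matrix.star_apply] using h1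
    have := congrArg Complex.re this
    simpa [Complex.mul_conj] using this
  have hnse : ∀ i j, Complex.normSq (C i j) ≤ 1 := by
    intro i j
    calc Complex.normSq (C i j) ≤ ∑ k, Complex.normSq (C i k) :=
          Finset.single_le_sum (fun k _ => Complex.normSq_nonneg _) (Finset.mem_univ j)
      _ = 1 := hrow i
  have hre : ∀ i, (C i i).re ≤ 1 := by
    intro i
    calc (C i i).re ≤ ‖C i i‖ := Complex.re_le_norm _
      _ ≤ 1 := by
          rw [← Real.sqrt_one]
          rw [Complex.norm_def]; exact Real.sqrt_le_sqrt (hnse i i)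
  have htr : ∑ i, (C i i).re = (n : ℝ) := by
    have := congrArg Complex.re h
    simpa [Matrix.trace, Complex.re_sum] using this
  have hdiag : ∀ i, (C i i).re = 1 := by
    have : ∑ i : Fin n, (C i i).re = ∑ i : Fin n, (1 : ℝ) := by
      simp [htr]
    intro i
    exact (Finset.sum_eq_sum_iff_of_le (fun i _ => hre i)).mp this i (Finset.mem_univ i)
  have hone : ∀ i, C i i = 1 := by
    intro i
    have h1 : Complex.normSq (C i i) ≤ 1 := hnse i i
    have him : (C i i).im = 0 := by
      have : 1 + (C i i).im ^ 2 ≤ 1 := by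
        rw [Complex.normSq_apply, hdiag i] at h1
        nlinarith [h1]
      nlinarith [sq_nonneg (C i i).im]
    exact Complex.ext (hdiag i) him
  ext i j
  rcases eq_or_ne i j with rfl | hij
  · simp [hone i, Matrix.one_apply]
  · have hzero : Complex.normSq (C i j) = 0 := by
      have hsplit : Complex.normSq (C i i)
          + ∑ k ∈ Finset.univ.erase i, Complex.normSq (C i k) = 1 := by
        rw [Finset.add_sum_erase Finset.univ (fun k => Complex.normSq (C i k))
          (Finset.mem_univ i)]
        exact hrow i
      rw [hone i] at hsplit
      simp only [Complex.normSq_one] at hsplit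
      have hs2 : ∑ k ∈ Finset.univ.erase i, Complex.normSq (C i k) = 0 := by linarith
      have hju : j ∈ Finset.univ.erase i := Finset.mem_erase.mpr ⟨hij.symm, Finset.mem_univ j⟩
      exact (Finset.sum_eq_zero_iff_of_nonneg (fun k _ => Complex.normSq_nonneg _)).mp hs2 j hju
    simp [Complex.normSq_eq_zero.mp hzero, Matrix.one_apply, hij]

open Matrix Polynomial Module in
lemma root_charpoly_pow_factorial {n : ℕ} (A B C A₂ B₂ : Matrix (Fin n) (Fin n) ℂ)
    (hA : A₂ * A = 1) (hB : B₂ * B = 1)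
    (hCBA : C * B * A = A * B) (hCA : C * A = A * C) (hCB : C * B = B * C)
    (μ : ℂ) (hμ : C.charpoly.IsRoot μ) : μ ^ (Nat.factorial n) = 1 := by
  classical
  -- the eigenvalue has an eigenvector
  have hdet : (μ • (1 : Matrix (Fin n) (Fin n) ℂ) - C).det = 0 := by
    have : C.charpoly.eval μ = (μ • (1 : Matrix (Fin n) (Fin n) ℂ) - C).det := by
      rw [Matrix.charpoly, eval_det, Matrix.matPolyEquiv_charmatrix]
      simp [Matrix.scalar_apply, smul_one_eq_diagonal]
    rw [← this]; exact hμ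
  have hker : ∃ v : Fin n → ℂ, v ≠ 0 ∧ Matrix.toLin' C v = μ • v := by
    have h1 : LinearMap.det (Matrix.toLin' (μ • (1 : Matrix (Fin n) (Fin n) ℂ) - C)) = 0 := by
      rw [LinearMap.det_toLin']; exact hdet
    obtain ⟨v, hv, hv0⟩ := SetLike.exists_of_lt (LinearMap.bot_lt_ker_of_det_eq_zero h1)
    refine ⟨v, by simpa using hv0, ?_⟩
    have : Matrix.toLin' (μ • (1 : Matrix (Fin n) (Fin n) ℂ) - C) v = 0 := hv
    have h2 : μ • v - Matrix.toLin' C v = 0 := by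
      simpa [map_sub, Matrix.toLin'_one] using this
    linear_combination (norm := module) -h2
  obtain ⟨v, hv0, hv⟩ := hker
  set E : Submodule ℂ (Fin n → ℂ) := Module.End.eigenspace (Matrix.toLin' C) μ with hE
  have hvE : v ∈ E := Module.End.mem_eigenspace_iff.mpr hv
  have hEne : E ≠ ⊥ := fun h => hv0 (by simpa [h] using hvE)
  have hfin : FiniteDimensional ℂ (Fin n → ℂ) := inferInstance
  set d : ℕ := Module.finrank ℂ E with hd
  have hd0 : 0 < d := Module.finrank_pos_iff.mpr (Submodule.nontrivial_iff_ne_bot.mpr hEne)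
  have hdn : d ≤ n := by
    have := Submodule.finrank_le E
    simpa [Module.finrank_fintype_fun_eq_card] using this
  have hmapsto : ∀ X : Matrix (Fin n) (Fin n) ℂ, C * X = X * C →
      Set.MapsTo (Matrix.toLin' X) E E := by
    intro X hX x hx
    rw [SetLike.mem_coe, hE, Module.End.mem_eigenspace_iff] at hx ⊢
    have h1 : Matrix.toLin' C (Matrix.toLin' X x) = Matrix.toLin' X (Matrix.toLin' C x) := by
      rw [← LinearMap.comp_apply, ← Matrix.toLin'_mul, hX, Matrix.toLin'_mul,
        LinearMap.comp_apply]
    rw [h1, hx, LinearMap.map_smul]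
  have hmA := hmapsto A hCA
  have hmB := hmapsto B hCB
  have hmC := hmapsto C rfl
  set A' := (Matrix.toLin' A).restrict hmA with hA'
  set B' := (Matrix.toLin' B).restrict hmB with hB'
  set C' := (Matrix.toLin' C).restrict hmC with hC'
  have hCid : C' = (μ : ℂ) • (1 : Module.End ℂ E) := by
    ext x
    have hx : Matrix.toLin' C (x : Fin n → ℂ) = μ • (x : Fin n → ℂ) :=
      Module.End.mem_eigenspace_iff.mp x.2
    exact congrFun hx _
  have hdetC' : LinearMap.det C' = μ ^ d := by
    rw [hCid, LinearMap.det_smul]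
    simp
    rfl
  have hAinj : Function.Injective (Matrix.toLin' A) := by
    have h2 : (Matrix.toLin' A₂) ∘ₗ (Matrix.toLin' A) = LinearMap.id := by
      rw [← Matrix.toLin'_mul, hA, Matrix.toLin'_one]
    intro x y hxy
    have := congrArg (Matrix.toLin' A₂) hxy
    rw [← LinearMap.comp_apply, ← LinearMap.comp_apply, h2] at this
    simpa using this
  have hBinj : Function.Injective (Matrix.toLin' B) := by
    have h2 : (Matrix.toLin' B₂) ∘ₗ (Matrix.toLin' B) = LinearMap.id := by
      rw [← Matrix.toLin'_mul, hB, Matrix.toLin'_one]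
    intro x y hxy
    have := congrArg (Matrix.toLin' B₂) hxy
    rw [← LinearMap.comp_apply, ← LinearMap.comp_apply, h2] at this
    simpa using this
  have hdetA' : LinearMap.det A' ≠ 0 := by
    have hinj : Function.Injective A' := by
      intro x y hxy
      exact Subtype.ext (hAinj (congrArg Subtype.val hxy))
    have : IsUnit A' := by
      rw [LinearMap.isUnit_iff_ker_eq_bot]
      exact LinearMap.ker_eq_bot.mpr hinj
    exact (LinearMap.isUnit_det A' this).ne_zero
  have hdetB' : LinearMap.det B' ≠ 0 := by
    have hinj : Function.Injective B' := by
      intro x y hxy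
      exact Subtype.ext (hBinj (congrArg Subtype.val hxy))
    have : IsUnit B' := by
      rw [LinearMap.isUnit_iff_ker_eq_bot]
      exact LinearMap.ker_eq_bot.mpr hinj
    exact (LinearMap.isUnit_det B' this).ne_zero
  have hmCBA : Set.MapsTo (Matrix.toLin' (C * B * A)) E E := by
    intro x hx
    have hx' : Matrix.toLin' (C * B * A) x
        = Matrix.toLin' C (Matrix.toLin' B (Matrix.toLin' A x)) := by
      simp [Matrix.toLin'_mul]
    rw [hx']
    exact hmC (hmB (hmA hx))
  have hmAB : Set.MapsTo (Matrix.toLin' (A * B)) E E := by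
    intro x hx
    have hx' : Matrix.toLin' (A * B) x = Matrix.toLin' A (Matrix.toLin' B x) := by
      simp [Matrix.toLin'_mul]
    rw [hx']
    exact hmA (hmB hx)
  have k1 : (Matrix.toLin' (C * B * A)).restrict hmCBA = C' ∘ₗ B' ∘ₗ A' := by
    ext x
    exact congrFun (show Matrix.toLin' (C * B * A) (x : Fin n → ℂ) = Matrix.toLin' C (Matrix.toLin' B (Matrix.toLin' A x)) by simp [Matrix.toLin'_mul]) _
  have k2 : (Matrix.toLin' (A * B)).restrict hmAB = A' ∘ₗ B' := by
    ext x
    exact congrFun (show Matrix.toLin' (A * B) (x : Fin n → ℂ) = Matrix.toLin' A (Matrix.toLin' B x) by simp [Matrix.toLin'_mul]) _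
  have k3 : (Matrix.toLin' (C * B * A)).restrict hmCBA = (Matrix.toLin' (A * B)).restrict hmAB := by
    ext x
    simp [LinearMap.restrict_apply, hCBA]
  have keq : μ ^ d * (LinearMap.det B' * LinearMap.det A')
      = LinearMap.det A' * LinearMap.det B' := by
    calc μ ^ d * (LinearMap.det B' * LinearMap.det A')
        = LinearMap.det C' * (LinearMap.det B' * LinearMap.det A') := by rw [hdetC']
      _ = LinearMap.det ((Matrix.toLin' (C * B * A)).restrict hmCBA) := by
          rw [k1, LinearMap.det_comp, LinearMap.det_comp]
      _ = LinearMap.det ((Matrix.toLin' (A * B)).restrict hmAB) := by rw [k3]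
      _ = LinearMap.det A' * LinearMap.det B' := by rw [k2, LinearMap.det_comp]
  have hpow : μ ^ d = 1 := by
    have hne : LinearMap.det B' * LinearMap.det A' ≠ 0 := mul_ne_zero hdetB' hdetA'
    have : μ ^ d * (LinearMap.det B' * LinearMap.det A')
        = 1 * (LinearMap.det B' * LinearMap.det A') := by
      rw [keq]; ring
    exact mul_right_cancel₀ hne this
  obtain ⟨k, hk⟩ := Nat.dvd_factorial hd0 hdn
  rw [hk, pow_mul, hpow, one_pow]

lemma exists_fn_of_multiset {m : ℕ} (s : Multiset ℂ) (hc : Multiset.card s = m)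
    (P : ℂ → Prop) (hP : ∀ x ∈ s, P x) :
    ∃ v : Fin m → ℂ, (∀ i, P (v i)) ∧ ∑ i, v i = s.sum := by
  induction s using Quotient.inductionOn with
  | h l =>
    simp only [Multiset.quot_mk_to_coe, Multiset.coe_card] at hc
    subst hc
    refine ⟨l.get, fun i => hP _ (by simp [List.get_mem]), ?_⟩
    conv_rhs => rw [← List.ofFn_get l]
    show _ = (List.ofFn l.get : Multiset ℂ).sum
    rw [Multiset.sum_coe, List.sum_ofFn]

lemma trace_mem_aux {n : ℕ} (A B C A₂ B₂ : Matrix (Fin n) (Fin n) ℂ)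
    (hA : A₂ * A = 1) (hB : B₂ * B = 1)
    (hCBA : C * B * A = A * B) (hCA : C * A = A * C) (hCB : C * B = B * C) :
    ∃ v : Fin n → ℂ, (∀ i, v i ^ (Nat.factorial n) = 1) ∧ ∑ i, v i = C.trace := by
  have hsplits : C.charpoly.Splits := IsAlgClosed.splits C.charpoly
  have hcard : Multiset.card C.charpoly.roots = n := by
    rw [(Polynomial.splits_iff_card_roots).mp hsplits, Matrix.charpoly_natDegree_eq_dim]
    simp
  obtain ⟨v, hv, hsum⟩ := exists_fn_of_multiset C.charpoly.roots hcard
    (fun x => x ^ Nat.factorial n = 1)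
    (fun x hx => root_charpoly_pow_factorial A B C A₂ B₂ hA hB hCBA hCA hCB x
      (Polynomial.isRoot_of_mem_roots hx))
  exact ⟨v, hv, by rw [hsum, ← Matrix.trace_eq_sum_roots_charpoly]⟩

open scoped commutatorElement

/-- Let `Γ` be a finitely generated nilpotent group and `K` a closed subgroup of `U(n)`.
Every representation in the connected component of the trivial homomorphism `𝟙` in
`Hom(Γ,K)` kills the commutator subgroup `[Γ,Γ]`. -/
theorem component_of_trivial_kills_commutator
    (n : ℕ) (K : Subgroup (Matrix.unitaryGroup (Fin n) ℂ))
    (hK : IsClosed (K : Set (Matrix.unitaryGroup (Fin n) ℂ)))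
    (Γ : Type*) [Group Γ] (hfg : Group.FG Γ) (hnil : Group.IsNilpotent Γ) :
    ∀ ρ ∈ connectedComponent (1 : Γ →* ↥K), commutator Γ ≤ ρ.ker := by
  classical
  -- the finite set of possible traces
  set T : Set ℂ := (fun v : Fin n → ℂ => ∑ i, v i) '' {v | ∀ i, v i ^ Nat.factorial n = 1}
    with hT
  have hTfin : T.Finite := by
    apply Set.Finite.image
    have hR : {z : ℂ | z ^ Nat.factorial n = 1}.Finite := by
      have hsub : {z : ℂ | z ^ Nat.factorial n = 1}
          ⊆ {x | (Polynomial.X ^ Nat.factorial n - 1 : Polynomial ℂ).IsRoot x} := by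
        intro z hz
        simp only [Set.mem_setOf_eq] at hz ⊢
        simp [Polynomial.IsRoot, hz]
      have hne : (Polynomial.X ^ Nat.factorial n - 1 : Polynomial ℂ) ≠ 0 := by
        have := Polynomial.monic_X_pow_sub_C (1 : ℂ) (Nat.factorial_ne_zero n)
        simpa using this.ne_zero
      exact (Polynomial.finite_setOf_isRoot hne).subset hsub
    have hsub2 : {v : Fin n → ℂ | ∀ i, v i ^ Nat.factorial n = 1}
        ⊆ Set.pi Set.univ (fun _ => {z : ℂ | z ^ Nat.factorial n = 1}) := by
      intro v hv i _
      exact hv i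
    exact (Set.Finite.pi (fun _ => hR)).subset hsub2
  -- the coercion from K to matrices, as a monoid hom
  set Mat : ↥K →* Matrix (Fin n) (Fin n) ℂ :=
    ((unitary (Matrix (Fin n) (Fin n) ℂ)).subtype).comp K.subtype with hMat
  have contMat : Continuous Mat := continuous_subtype_val.comp continuous_subtype_val
  have contEval : ∀ g : Γ, Continuous (fun τ : Γ →* ↥K => τ g) := fun g =>
    (continuous_apply g).comp continuous_induced_dom
  have hMatMem : ∀ x : ↥K, Mat x ∈ Matrix.unitaryGroup (Fin n) ℂ := fun x => (x : Matrix.unitaryGroup (Fin n) ℂ).2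
  -- the key descending step
  have key : ∀ m : ℕ,
      (∀ σ ∈ connectedComponent (1 : Γ →* ↥K), Subgroup.lowerCentralSeries (⊤ : Subgroup Γ) (m + 2) ≤ σ.ker) →
      ∀ σ ∈ connectedComponent (1 : Γ →* ↥K), Subgroup.lowerCentralSeries (⊤ : Subgroup Γ) (m + 1) ≤ σ.ker := by
    intro m H σ hσ
    rw [Subgroup.lowerCentralSeries_succ, Subgroup.commutator_def, Subgroup.closure_le]
    rintro x ⟨a, ha, b, -, rfl⟩
    set g : Γ := ⁅a, b⁆ with hgdef
    have hgx : a * b * a⁻¹ * b⁻¹ = g := rfl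
    have hgL : g ∈ Subgroup.lowerCentralSeries (⊤ : Subgroup Γ) (m + 1) := by
      rw [Subgroup.lowerCentralSeries_succ, Subgroup.commutator_def]
      exact Subgroup.subset_closure ⟨a, ha, b, Subgroup.mem_top b, rfl⟩
    set f : (Γ →* ↥K) → ℂ := fun τ => (Mat (τ g)).trace with hf
    have hfc : Continuous f := Continuous.matrix_trace (contMat.comp (contEval g))
    have hfT : ∀ τ ∈ connectedComponent (1 : Γ →* ↥K), f τ ∈ T := by
      intro τ hτ
      have hker : Subgroup.lowerCentralSeries (⊤ : Subgroup Γ) (m + 2) ≤ τ.ker := H τ hτ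
      have hcomm : ∀ x : Γ, Mat (τ g) * Mat (τ x) = Mat (τ x) * Mat (τ g) := by
        intro x
        have h1 : ⁅g, x⁆ ∈ Subgroup.lowerCentralSeries (⊤ : Subgroup Γ) (m + 2) := by
          rw [show m + 2 = (m + 1) + 1 from rfl, Subgroup.lowerCentralSeries_succ, Subgroup.commutator_def]
          exact Subgroup.subset_closure ⟨g, hgL, x, Subgroup.mem_top x, rfl⟩
        have h2 : τ ⁅g, x⁆ = 1 := hker h1
        rw [map_commutatorElement] at h2
        have h3 : τ g * τ x = τ x * τ g := commutatorElement_eq_one_iff_mul_comm.mp h2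
        calc Mat (τ g) * Mat (τ x) = Mat (τ g * τ x) := (map_mul Mat _ _).symm
          _ = Mat (τ x * τ g) := by rw [h3]
          _ = Mat (τ x) * Mat (τ g) := map_mul Mat _ _
      have hCBA : Mat (τ g) * Mat (τ b) * Mat (τ a) = Mat (τ a) * Mat (τ b) := by
        have hgrp : g * b * a = a * b := by
          rw [hgdef]; group
        rw [← map_mul, ← map_mul, ← map_mul, ← map_mul, ← map_mul, ← map_mul, hgrp]
      have hAinv : Mat (τ a⁻¹) * Mat (τ a) = 1 := by
        rw [← map_mul, ← map_mul, inv_mul_cancel, map_one, map_one]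
      have hBinv : Mat (τ b⁻¹) * Mat (τ b) = 1 := by
        rw [← map_mul, ← map_mul, inv_mul_cancel, map_one, map_one]
      obtain ⟨v, hv, hsum⟩ := trace_mem_aux (Mat (τ a)) (Mat (τ b)) (Mat (τ g))
        (Mat (τ a⁻¹)) (Mat (τ b⁻¹)) hAinv hBinv hCBA (hcomm a) (hcomm b)
      exact ⟨v, hv, hsum⟩
    have hn1 : f 1 = (n : ℂ) := by
      simp only [hf, MonoidHom.one_apply, map_one]
      simp [Matrix.trace_one]
    have hfσ : f σ = (n : ℂ) := by
      by_contra hne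
      have hu : IsOpen (f ⁻¹' ((T \ {(n : ℂ)})ᶜ)) :=
        ((hTfin.subset Set.diff_subset).isClosed).isOpen_compl.preimage hfc
      have hw : IsOpen (f ⁻¹' ({(n : ℂ)}ᶜ)) := isClosed_singleton.isOpen_compl.preimage hfc
      have hcover : connectedComponent (1 : Γ →* ↥K)
          ⊆ f ⁻¹' ((T \ {(n : ℂ)})ᶜ) ∪ f ⁻¹' ({(n : ℂ)}ᶜ) := by
        intro τ _
        by_cases hcase : f τ = (n : ℂ)
        · left
          simp [hcase]
        · right
          simpa using hcase
      have h1u : (connectedComponent (1 : Γ →* ↥K) ∩ f ⁻¹' ((T \ {(n : ℂ)})ᶜ)).Nonempty :=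
        ⟨1, mem_connectedComponent, by simp [hn1]⟩
      have h1w : (connectedComponent (1 : Γ →* ↥K) ∩ f ⁻¹' ({(n : ℂ)}ᶜ)).Nonempty :=
        ⟨σ, hσ, by simpa using hne⟩
      obtain ⟨τ, hτc, hτu, hτw⟩ := isPreconnected_connectedComponent _ _ hu hw hcover h1u h1w
      have hτT : f τ ∈ T := hfT τ hτc
      have hτ1 : f τ ∉ T \ {(n : ℂ)} := hτu
      have hτ2 : f τ ≠ (n : ℂ) := by simpa using hτw
      exact hτ1 ⟨hτT, hτ2⟩
    have hMat1 : Mat (σ g) = 1 :=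
      unitary_trace_eq_card_imp_one _ (hMatMem (σ g)) hfσ
    have hσg : σ g = 1 := by
      have h4 : Mat (σ g) = Mat 1 := by rw [hMat1, map_one]
      exact Subtype.ext (Subtype.ext h4)
    simp only [SetLike.mem_coe]
    exact MonoidHom.mem_ker.mpr hσg
  -- descending induction
  have main : ∀ j m : ℕ, Subgroup.lowerCentralSeries (⊤ : Subgroup Γ) (m + 1 + j) = ⊥ →
      ∀ σ ∈ connectedComponent (1 : Γ →* ↥K), Subgroup.lowerCentralSeries (⊤ : Subgroup Γ) (m + 1) ≤ σ.ker := by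
    intro j
    induction j with
    | zero =>
      intro m h σ _
      rw [show m + 1 + 0 = m + 1 from rfl] at h
      rw [h]
      exact bot_le
    | succ j ih =>
      intro m h σ hσ
      refine key m (fun τ hτ => ?_) σ hσ
      exact ih (m + 1) (by rw [show m + 1 + 1 + j = m + 1 + (j + 1) by omega]; exact h) τ hτ
  intro ρ hρ
  obtain ⟨c, hc⟩ := Subgroup.nilpotent_iff_lowerCentralSeries.mp hnil
  have hc1 : Subgroup.lowerCentralSeries (⊤ : Subgroup Γ) (0 + 1 + c) = ⊥ := by
    rw [eq_bot_iff, ← hc]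
    exact Subgroup.lowerCentralSeries_antitone _ (by omega)
  have := main c 0 hc1 ρ hρ
  rw [← Subgroup.top_lowerCentralSeries_one]
  exact this
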